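/- Let ξ(λ) = Σ_{d=-1}^{g} ξ_d λ^d be as above with ξ_d = -(conjugate transpose of ξ_{g-1-d}). Then for every λ on the unit circle, λ^{-g}·(-λ det ξ(λ)) ≤ 0, i.e. λ^{-g} a(λ) is real and nonpositive for |λ| = 1. -/

import Mathlib

open Complex Matrix

/-- for `|λ| = 1`, `λ^{-g} a(λ)` is real and nonpositive. -/
theorem stmt_1 (g : ℕ) (hg : 1 ≤ g) (ξ : ℕ → Matrix (Fin 2) (Fin 2) ℂ)
    (htr : ∀ d, (ξ d).trace = 0)
    (hsym : ∀ d ≤ g + 1, ξ d = -(ξ (g + 1 - d))ᴴ)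
    (a : ℂ → ℂ)
    (ha : ∀ l : ℂ, l ≠ 0 →
      a l = -l * (∑ d ∈ Finset.range (g + 2), (l ^ ((d : ℤ) - 1)) • ξ d).det) :
    ∀ l : ℂ, ‖l‖ = 1 →
      ∃ r : ℝ, r ≤ 0 ∧ l ^ (-(g : ℤ)) * a l = (r : ℂ) := by
  intro l hl
  have hl0 : l ≠ 0 := fun h => by simp [h] at hl
  have hconj : (starRingEnd ℂ) l = l⁻¹ := (Complex.inv_eq_conj hl).symm
  set μ : ℂ := l ^ ((1 : ℤ) - (g : ℤ)) with hμ
  set M : Matrix (Fin 2) (Fin 2) ℂ :=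
    ∑ d ∈ Finset.range (g + 2), (l ^ ((d : ℤ) - 1)) • ξ d with hMdef
  have hM : Mᴴ = (-μ) • M := by
    have h1 : (-μ) • M = ∑ d ∈ Finset.range (g + 2), (-(μ * l ^ ((d : ℤ) - 1))) • ξ d := by
      rw [hMdef, Finset.smul_sum]
      exact Finset.sum_congr rfl fun d _ => by rw [smul_smul]; module
    rw [h1, ← Finset.sum_range_reflect (fun d => (-(μ * l ^ ((d : ℤ) - 1))) • ξ d) (g + 2)]
    rw [hMdef, Matrix.conjTranspose_sum]
    refine Finset.sum_congr rfl fun d hd => ?_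
    have hd' : d ≤ g + 1 := Nat.lt_succ_iff.mp (Finset.mem_range.mp hd)
    have hcast : ((g + 2 - 1 - d : ℕ) : ℤ) = (g : ℤ) + 1 - d := by omega
    have hξ : (ξ d)ᴴ = -(ξ (g + 1 - d)) := by
      rw [hsym d hd']; simp
    have hidx : g + 2 - 1 - d = g + 1 - d := by omega
    rw [Matrix.conjTranspose_smul, hξ, hidx]
    have hc : star (l ^ ((d : ℤ) - 1)) = μ * l ^ (((g + 1 - d : ℕ) : ℤ) - 1) := by
      have : ((g + 1 - d : ℕ) : ℤ) = (g : ℤ) + 1 - d := by omega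
      rw [this, RCLike.star_def, map_zpow₀, hconj, _root_.inv_zpow, ← _root_.zpow_neg l, hμ,
        ← zpow_add₀ hl0]
      congr 1
      ring
    rw [hc, smul_neg, ← neg_smul]
  -- entry relations
  have e00 : (starRingEnd ℂ) (M 0 0) = -μ * M 0 0 := by
    have := congrFun (congrFun hM 0) 0
    simpa [Matrix.conjTranspose_apply] using this
  have e01 : (starRingEnd ℂ) (M 1 0) = -μ * M 0 1 := by
    have := congrFun (congrFun hM 0) 1
    simpa [Matrix.conjTranspose_apply] using this
  have htrM : M 0 0 + M 1 1 = 0 := by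
    have h : M.trace = 0 := by
      rw [hMdef, Matrix.trace_sum]
      simp [Matrix.trace_smul, htr]
    rw [Matrix.trace_fin_two] at h
    exact h
  have h11 : M 1 1 = -M 0 0 := by linear_combination htrM
  have n0 : (starRingEnd ℂ) (M 0 0) * M 0 0 = ((normSq (M 0 0) : ℝ) : ℂ) := by
    rw [mul_comm, Complex.mul_conj]
  have n1 : (starRingEnd ℂ) (M 1 0) * M 1 0 = ((normSq (M 1 0) : ℝ) : ℂ) := by
    rw [mul_comm, Complex.mul_conj]
  have hpow : l ^ (-(g : ℤ)) * l = μ := by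
    rw [hμ, show (1 : ℤ) - (g : ℤ) = -(g : ℤ) + 1 by ring, zpow_add_one₀ hl0]
  refine ⟨-(normSq (M 0 0) + normSq (M 1 0)), neg_nonpos.mpr (add_nonneg (normSq_nonneg _) (normSq_nonneg _)), ?_⟩
  rw [ha l hl0, ← hMdef, Matrix.det_fin_two, h11]
  push_cast
  linear_combination (M 0 0 * M 0 0 + M 0 1 * M 1 0) * hpow + M 0 0 * e00 + M 1 0 * e01 - n0 - n1
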